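/- For every regular uncountable cardinal κ there exists a totally disconnected compact Hausdorff space X such that Nt(X) = κ and X has a P_κ-point. (Concretely, the closed subspace of 2^κ consisting of all f such that for every odd α < κ, either f(α) = 0 or f is identically 1 on α, has a κ^op-like base, and the constant-1 function is a P_κ-point.) -/

import Mathlib

open Cardinal TopologicalSpace

/-- The Noetherian type of `X`: the least infinite `λ` such that `X` has a base in
which no member is (strictly) contained in `λ`-many members. -/
noncomputable def noetherianType (X : Type u) [TopologicalSpace X] : Cardinal.{u} :=
  sInf {c | ℵ₀ ≤ c ∧ ∃ B : Set (Set X), IsTopologicalBasis B ∧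
    ∀ u ∈ B, #{v : Set X // v ∈ B ∧ u ⊂ v} < c}

/-- `p` is a `P_κ`-point: the intersection of fewer than `κ`-many neighborhoods of `p`
always has `p` in its interior (i.e. is again a neighborhood of `p`). -/
def IsPkappaPoint {X : Type u} [TopologicalSpace X] (p : X) (κ : Cardinal.{u}) : Prop :=
  ∀ 𝒰 : Set (Set X), #𝒰 < κ → (∀ u ∈ 𝒰, u ∈ nhds p) → ⋂₀ 𝒰 ∈ nhds p

open Set

noncomputable section
namespace NtProof
open scoped Classical

variable (κ : Cardinal.{0})

abbrev W : Type := κ.ord.ToType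
abbrev I : Type := W κ ×ₗ Bool

variable {κ}

/-- the "odd" coordinate indexed by `w`. -/
def oc (w : W κ) : I κ := toLex (w, true)

def odd (j : I κ) : Prop := (ofLex j).2 = true

/-- the even partner sitting just below an odd coordinate -/
def pe (j : I κ) : I κ := toLex ((ofLex j).1, false)

lemma oc_eq_of_odd {j : I κ} (hj : odd j) : oc (ofLex j).1 = j := by
  show toLex ((ofLex j).1, true) = j
  conv_rhs => rw [← toLex_ofLex j]
  congr 1
  exact Prod.ext rfl hj.symm

lemma pe_lt_of_odd {j : I κ} (hj : odd j) : pe j < j := by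
  conv_rhs => rw [← oc_eq_of_odd hj]
  exact Prod.Lex.lt_iff.2 (Or.inr ⟨rfl, Bool.false_lt_true⟩)

lemma lt_oc_of_fst_lt {j : I κ} {w : W κ} (h : (ofLex j).1 < w) : j < oc w := by
  rw [← toLex_ofLex j]
  exact Prod.Lex.lt_iff.2 (Or.inl h)

def Xs : Set (I κ → Bool) := {f | ∀ w : W κ, f (oc w) = true → ∀ j < oc w, f j = true}

variable (κ) in
abbrev Xt : Type := ↥(Xs (κ := κ))

lemma ones_le {f : I κ → Bool} (hf : f ∈ Xs) {j' : I κ} (h1 : f j' = true) (hodd : odd j')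
    {j : I κ} (hle : j ≤ j') : f j = true := by
  rcases eq_or_lt_of_le hle with rfl | hlt
  · exact h1
  · rw [← oc_eq_of_odd hodd] at h1 hlt
    exact hf _ h1 _ hlt

/-- canonical elements of `Xs`: indicators of suitable sets -/
def seg (s : Set (I κ)) : I κ → Bool := fun j => if j ∈ s then true else false

lemma seg_mem_Xs {s : Set (I κ)} (hs : ∀ w : W κ, oc w ∈ s → ∀ j < oc w, j ∈ s) :
    seg s ∈ Xs := by
  intro w hw j hj
  have h : oc w ∈ s := by
    by_contra h
    simp [seg, h] at hw
  simp [seg, hs w h j hj]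

@[simp] lemma seg_eq_true_iff {s : Set (I κ)} {j : I κ} : seg s j = true ↔ j ∈ s := by
  simp [seg]

@[simp] lemma seg_eq_false_iff {s : Set (I κ)} {j : I κ} : seg s j = false ↔ j ∉ s := by
  simp [seg]

/-- the point `p`: the constant `true` function -/
def pp : Xt κ := ⟨fun _ => true, fun _ _ _ _ => rfl⟩

/-- Xs is closed, hence compact. -/
lemma isClosed_Xs : IsClosed (Xs (κ := κ)) := by
  have : Xs (κ := κ) = ⋂ (w : W κ), ⋂ (j : I κ), ⋂ (_ : j < oc w),
      {f : I κ → Bool | f (oc w) = true → f j = true} := by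
    ext f
    constructor
    · intro hf
      simp only [Set.mem_iInter]
      intro w j hj h1
      exact hf w h1 j hj
    · intro hf w h1 j hj
      exact Set.mem_iInter.1 (Set.mem_iInter.1 (Set.mem_iInter.1 hf w) j) hj h1
  rw [this]
  refine isClosed_iInter fun w => isClosed_iInter fun j => isClosed_iInter fun _ => ?_
  have : {f : I κ → Bool | f (oc w) = true → f j = true} =
      ((fun f : I κ → Bool => f (oc w)) ⁻¹' {true})ᶜ ∪ ((fun f : I κ → Bool => f j) ⁻¹' {true}) := by
    ext f; by_cases h : f (oc w) = true <;> simp [h]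
  rw [this]
  exact ((IsOpen.preimage (continuous_apply _) (isOpen_discrete _)).isClosed_compl).union
    (IsClosed.preimage (continuous_apply _) (isClosed_discrete _))

instance : CompactSpace (Xt κ) := isCompact_iff_compactSpace.mp isClosed_Xs.isCompact

example : T2Space (Xt κ) := inferInstance
example : TotallyDisconnectedSpace (Xt κ) := inferInstance


lemma exists_oc_above (hreg : κ.IsRegular) (s : Set (I κ)) (hs : #s < κ) :
    ∃ w : W κ, ∀ i ∈ s, i < oc w := by
  haveI : IsWellOrder (W κ) (· < ·) := isWellOrder_lt
  have h2 : Set.Bounded (· < ·) ((fun i : I κ => (ofLex i).1) '' s) := by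
    apply not_isCofinal_iff.1
    intro hcof
    have hle := Ordinal.lt_cof_type hcof
    rw [Ordinal.cof_toType, hreg.cof_ord] at hle
    exact absurd ((mk_image_le).trans_lt hs) (not_lt_of_ge hle)
  obtain ⟨w, hw⟩ := h2
  exact ⟨w, fun i hi => lt_oc_of_fst_lt (hw _ (mem_image_of_mem _ hi))⟩

lemma exists_cyl_subset {u : Set (Xt κ)} {f : Xt κ} (hu : u ∈ nhds f) :
    ∃ F : Finset (I κ),
      {f' : Xt κ | ∀ j ∈ F, (f' : I κ → Bool) j = (f : I κ → Bool) j} ⊆ u := by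
  obtain ⟨v, hvu, hv, hfv⟩ := mem_nhds_iff.mp hu
  obtain ⟨V, hV, rfl⟩ := isOpen_induced_iff.mp hv
  obtain ⟨F, t, ht, hsub⟩ := isOpen_pi_iff.mp hV _ hfv
  refine ⟨F, fun f' hf' => hvu ?_⟩
  apply hsub
  intro i hi
  rw [hf' i hi]
  exact (ht i hi).2

lemma mem_nhds_oc (w : W κ) (f : Xt κ) (hf : (f : I κ → Bool) (oc w) = true) :
    {f' : Xt κ | (f' : I κ → Bool) (oc w) = true} ∈ nhds f := by
  apply IsOpen.mem_nhds
  · have : {f' : Xt κ | (f' : I κ → Bool) (oc w) = true} =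
        (fun f' : Xt κ => (f' : I κ → Bool) (oc w)) ⁻¹' {true} := by
      ext f'; simp
    rw [this]
    exact IsOpen.preimage ((continuous_apply _).comp continuous_subtype_val)
      (isOpen_discrete _)
  · exact hf

lemma pk (hreg : κ.IsRegular) (hun : ℵ₀ < κ) : IsPkappaPoint (pp : Xt κ) κ := by
  intro 𝒰 h𝒰 hn
  choose Fu hFu using fun u : 𝒰 => exists_cyl_subset (hn u u.2)
  have hcard : #(⋃ u : 𝒰, (Fu u : Set (I κ))) < κ := by
    apply (mk_iUnion_le _).trans_lt
    apply Cardinal.mul_lt_of_lt hreg.aleph0_le h𝒰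
    apply lt_of_le_of_lt _ hun
    exact ciSup_le' fun u => le_of_lt (lt_aleph0_of_finite _)
  obtain ⟨w, hw⟩ := exists_oc_above hreg _ hcard
  apply Filter.mem_of_superset (mem_nhds_oc w pp rfl)
  intro f hf
  rw [Set.mem_sInter]
  intro u hu
  apply hFu ⟨u, hu⟩
  intro j hj
  have hjs : j ∈ ⋃ u : 𝒰, (Fu u : Set (I κ)) := mem_iUnion.2 ⟨⟨u, hu⟩, hj⟩
  exact ones_le f.2 hf rfl (le_of_lt (hw j hjs))

lemma not_isolated (hreg : κ.IsRegular) (hun : ℵ₀ < κ) :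
    ∀ u ∈ nhds (pp : Xt κ), ∃ q ∈ u, q ≠ pp := by
  intro u hu
  obtain ⟨F, hF⟩ := exists_cyl_subset hu
  obtain ⟨w, hw⟩ := exists_oc_above hreg (F : Set (I κ))
    ((lt_aleph0_of_finite _).trans hun)
  refine ⟨⟨seg (Iio (oc w)), seg_mem_Xs fun w' hw' j hj => lt_trans hj hw'⟩, ?_, ?_⟩
  · apply hF
    intro j hj
    exact seg_eq_true_iff.2 (hw j hj)
  · intro h
    have := congrArg (fun q : Xt κ => (q : I κ → Bool) (oc w)) h
    simp only [pp] at this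
    rw [seg_eq_false_iff.2 (by simp)] at this
    · exact Bool.false_ne_true this


@[simp] lemma not_odd_pe (j : I κ) : ¬ odd (pe j) := by
  simp [odd, pe]

lemma pe_le_of_odd {j : I κ} (hj : odd j) : pe j ≤ j := le_of_lt (pe_lt_of_odd hj)

def good (F : Finset (I κ)) (g : I κ → Bool) : Prop :=
  (∀ j ∈ F, odd j → g j = false → pe j ∈ F ∧ g (pe j) = true) ∧
  (∀ j ∈ F, g j = false → ∀ j' ∈ F, odd j' → g j' = true → j' < j)

def cylX (F : Finset (I κ)) (g : I κ → Bool) : Set (Xt κ) :=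
  {f | ∀ j ∈ F, (f : I κ → Bool) j = g j}

variable (κ) in
def BB : Set (Set (Xt κ)) := {S | ∃ F g, good F g ∧ S = cylX F g}

lemma isOpen_coord (j : I κ) (b : Bool) : IsOpen {f : Xt κ | (f : I κ → Bool) j = b} := by
  have : {f : Xt κ | (f : I κ → Bool) j = b} =
      (fun f : Xt κ => (f : I κ → Bool) j) ⁻¹' {b} := by ext f; simp
  rw [this]
  exact IsOpen.preimage ((continuous_apply _).comp continuous_subtype_val) (isOpen_discrete _)

lemma isOpen_cylX (F : Finset (I κ)) (g : I κ → Bool) : IsOpen (cylX F g) := by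
  have : cylX F g = ⋂ j ∈ F, {f : Xt κ | (f : I κ → Bool) j = g j} := by
    ext f; simp [cylX]
  rw [this]
  exact isOpen_biInter_finset fun j _ => isOpen_coord j (g j)

/-- In `X`, a `false` at the even partner forces a `false` at the odd coordinate. -/
lemma odd_false_of_pe_false {f : Xt κ} {j : I κ} (hodd : odd j)
    (h : (f : I κ → Bool) (pe j) = false) : (f : I κ → Bool) j = false := by
  cases hb : (f : I κ → Bool) j
  · rfl
  · have := ones_le f.2 hb hodd (pe_le_of_odd hodd)
    simp [this] at h

/-- values of a point of `X` satisfy the second goodness condition -/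
lemma lt_of_values {f : Xt κ} {j j' : I κ} (h0 : (f : I κ → Bool) j = false)
    (hodd : odd j') (h1 : (f : I κ → Bool) j' = true) : j' < j := by
  rcases lt_trichotomy j' j with h | h | h
  · exact h
  · rw [h] at h1; simp [h1] at h0
  · have := ones_le f.2 h1 hodd (le_of_lt h)
    simp [this] at h0

lemma basis_BB : IsTopologicalBasis (BB κ) := by
  apply isTopologicalBasis_of_isOpen_of_nhds
  · rintro u ⟨F, g, _, rfl⟩
    exact isOpen_cylX F g
  · intro f u hfu hu
    obtain ⟨F', hF'⟩ := exists_cyl_subset (hu.mem_nhds hfu)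
    set fb : I κ → Bool := (f : I κ → Bool) with hfb
    set F : Finset (I κ) := F'.biUnion (fun j₀ =>
      if odd j₀ ∧ fb j₀ = false then
        (if fb (pe j₀) = true then {j₀, pe j₀} else {pe j₀}) else {j₀}) with hF
    refine ⟨cylX F fb, ⟨F, fb, ⟨?_, ?_⟩, rfl⟩, ?_, ?_⟩
    · -- C1
      intro j hj hodd hval
      rw [hF, Finset.mem_biUnion] at hj
      obtain ⟨j₀, hj₀, hjmem⟩ := hj
      by_cases hc : odd j₀ ∧ fb j₀ = false
      · rw [if_pos hc] at hjmem
        by_cases hc2 : fb (pe j₀) = true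
        · rw [if_pos hc2] at hjmem
          rcases Finset.mem_insert.mp hjmem with rfl | hjm
          · refine ⟨?_, hc2⟩
            rw [hF, Finset.mem_biUnion]
            exact ⟨j, hj₀, by rw [if_pos hc, if_pos hc2]; simp⟩
          · rw [Finset.mem_singleton.mp hjm] at hodd
            exact absurd hodd (not_odd_pe _)
        · rw [if_neg hc2] at hjmem
          rw [Finset.mem_singleton.mp hjmem] at hodd
          exact absurd hodd (not_odd_pe _)
      · rw [if_neg hc] at hjmem
        rw [Finset.mem_singleton.mp hjmem] at hodd hval
        exact absurd ⟨hodd, hval⟩ hc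
    · -- C2
      intro j _ h0 j' _ hodd h1
      exact lt_of_values h0 hodd h1
    · -- f ∈ cylX F fb
      intro j _
      rfl
    · -- cylX F fb ⊆ u
      refine subset_trans ?_ hF'
      intro f' hf' j₀ hj₀
      have hmem : ∀ j ∈ F, (f' : I κ → Bool) j = fb j := hf'
      by_cases hc : odd j₀ ∧ fb j₀ = false
      · by_cases hc2 : fb (pe j₀) = true
        · apply hmem
          rw [hF, Finset.mem_biUnion]
          exact ⟨j₀, hj₀, by rw [if_pos hc, if_pos hc2]; simp⟩
        · have hpe : (f' : I κ → Bool) (pe j₀) = fb (pe j₀) := by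
            apply hmem
            rw [hF, Finset.mem_biUnion]
            exact ⟨j₀, hj₀, by rw [if_pos hc, if_neg hc2]; simp⟩
          have hpef : fb (pe j₀) = false := by
            cases hb : fb (pe j₀)
            · rfl
            · exact absurd hb hc2
          rw [hc.2, odd_false_of_pe_false hc.1 (by rw [hpe, hpef])]
      · apply hmem
        rw [hF, Finset.mem_biUnion]
        exact ⟨j₀, hj₀, by rw [if_neg hc]; simp⟩


lemma odd_oc (w : W κ) : odd (oc (κ := κ) w) := rfl

lemma mk_Iic_W_lt (hreg : κ.IsRegular) (w : W κ) : #(Set.Iic w) < κ := by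
  haveI : IsWellOrder (W κ) (· < ·) := isWellOrder_lt
  have h1 : #(Set.Iio w) < κ := by
    have := Ordinal.card_typein (r := ((· < ·) : W κ → W κ → Prop)) w
    have h2 : Ordinal.typein ((· < ·) : W κ → W κ → Prop) w < κ.ord := by
      have := Ordinal.typein_lt_type ((· < ·) : W κ → W κ → Prop) w
      rwa [Ordinal.type_toType] at this
    have h3 := (Cardinal.lt_ord.mp h2)
    rw [this] at h3
    exact lt_of_le_of_lt (le_of_eq (by rfl)) h3
  rw [← Set.Iio_insert]
  apply lt_of_le_of_lt Cardinal.mk_insert_le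
  exact Cardinal.add_lt_of_lt hreg.aleph0_le h1 (lt_of_lt_of_le one_lt_aleph0 hreg.aleph0_le)

lemma mk_Iic_I_lt (hreg : κ.IsRegular) (j : I κ) : #(Set.Iic j) < κ := by
  have hinj : Function.Injective (fun i : Set.Iic j =>
      ((⟨(ofLex i.1).1, Prod.Lex.monotone_fst _ _ i.2⟩ : Set.Iic (ofLex j).1),
        (ofLex i.1).2)) := by
    rintro ⟨i, hi⟩ ⟨i', hi'⟩ h
    simp only [Subtype.mk.injEq, Prod.mk.injEq] at h ⊢
    have : ofLex i = ofLex i' := Prod.ext (congrArg Subtype.val h.1) h.2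
    exact congrArg toLex this
  apply lt_of_le_of_lt (Cardinal.mk_le_of_injective hinj)
  rw [Cardinal.mk_prod]
  simp only [Cardinal.lift_id, Cardinal.mk_fintype, Fintype.card_bool]
  apply Cardinal.mul_lt_of_lt hreg.aleph0_le (mk_Iic_W_lt hreg _)
  exact lt_of_lt_of_le (Cardinal.nat_lt_aleph0 2) hreg.aleph0_le

/-- positions forced to be `true` on `cylX F g` -/
def S1 (F : Finset (I κ)) (g : I κ → Bool) : Set (I κ) :=
  {i | (i ∈ F ∧ g i = true) ∨ ∃ j' ∈ F, odd j' ∧ g j' = true ∧ i ≤ j'}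

lemma S1_lower {F : Finset (I κ)} {g : I κ → Bool} {w : W κ} (h : oc w ∈ S1 F g)
    {j : I κ} (hj : j < oc w) : j ∈ S1 F g := by
  rcases h with ⟨hmem, hval⟩ | ⟨j', hj', hodd, hval, hle⟩
  · exact Or.inr ⟨oc w, hmem, odd_oc w, hval, le_of_lt hj⟩
  · exact Or.inr ⟨j', hj', hodd, hval, le_of_lt (lt_of_lt_of_le hj hle)⟩

lemma seg_S1_mem_Xs {F : Finset (I κ)} {g : I κ → Bool} : seg (S1 F g) ∈ Xs :=
  seg_mem_Xs fun _ hw _ hj => S1_lower hw hj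

lemma not_mem_S1 {F : Finset (I κ)} {g : I κ → Bool} (hgood : good F g) {j : I κ}
    (hj : j ∈ F) (hval : g j = false) : j ∉ S1 F g := by
  rintro (⟨_, hval'⟩ | ⟨j', hj', hodd, hval', hle⟩)
  · simp [hval] at hval'
  · exact absurd hle (not_le_of_gt (hgood.2 j hj hval j' hj' hodd hval'))

lemma fmin_mem_cylX {F : Finset (I κ)} {g : I κ → Bool} (hgood : good F g) :
    (⟨seg (S1 F g), seg_S1_mem_Xs⟩ : Xt κ) ∈ cylX F g := by
  intro j hj
  cases hval : g j
  · exact seg_eq_false_iff.2 (not_mem_S1 hgood hj hval)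
  · exact seg_eq_true_iff.2 (Or.inl ⟨hj, hval⟩)

lemma forced_one {F : Finset (I κ)} {g : I κ → Bool} (hgood : good F g) {j : I κ}
    (h : cylX F g ⊆ {f : Xt κ | (f : I κ → Bool) j = true}) : j ∈ S1 F g := by
  have := h (fmin_mem_cylX hgood)
  exact seg_eq_true_iff.1 this

lemma forced_zero {F : Finset (I κ)} {g : I κ → Bool} (hgood : good F g) {j : I κ}
    (h : cylX F g ⊆ {f : Xt κ | (f : I κ → Bool) j = false}) :
    (j ∈ F ∧ g j = false) ∨ (odd j ∧ ∃ j₀ ∈ F, g j₀ = false ∧ j₀ < j) := by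
  by_contra hcon
  push_neg at hcon
  obtain ⟨h1, h2⟩ := hcon
  by_cases hodd : odd j
  · -- witness: seg (S1 ∪ Iic j)
    have hseg : seg (S1 F g ∪ Set.Iic j) ∈ Xs := by
      apply seg_mem_Xs
      rintro w (hw | hw) j₂ hj₂
      · exact Or.inl (S1_lower hw hj₂)
      · exact Or.inr (le_of_lt (lt_of_lt_of_le hj₂ hw))
    have hmem : (⟨_, hseg⟩ : Xt κ) ∈ cylX F g := by
      intro j₂ hj₂
      cases hval : g j₂
      · refine seg_eq_false_iff.2 ?_
        rintro (hS | hI)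
        · exact not_mem_S1 hgood hj₂ hval hS
        · rw [Set.mem_Iic] at hI
          rcases lt_or_eq_of_le hI with hlt | rfl
          · exact absurd (h2 hodd j₂ hj₂ hval) (not_le_of_gt hlt)
          · exact h1 hj₂ hval
      · exact seg_eq_true_iff.2 (Or.inl (Or.inl ⟨hj₂, hval⟩))
    have h3 := h hmem
    simp only [Set.mem_setOf_eq] at h3
    have h4 : seg (S1 F g ∪ Set.Iic j) j = true :=
      seg_eq_true_iff.2 (Or.inr (Set.mem_Iic.2 (le_refl j)))
    exact Bool.false_ne_true (h3.symm.trans h4)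
  · -- j even: witness seg (S1 ∪ {j})
    have hseg : seg (S1 F g ∪ {j}) ∈ Xs := by
      apply seg_mem_Xs
      rintro w (hw | hw) j₂ hj₂
      · exact Or.inl (S1_lower hw hj₂)
      · rw [Set.mem_singleton_iff] at hw
        rw [← hw] at hodd
        exact absurd (odd_oc w) hodd
    have hmem : (⟨_, hseg⟩ : Xt κ) ∈ cylX F g := by
      intro j₂ hj₂
      cases hval : g j₂
      · refine seg_eq_false_iff.2 ?_
        rintro (hS | hI)
        · exact not_mem_S1 hgood hj₂ hval hS
        · rw [Set.mem_singleton_iff] at hI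
          rw [hI] at hj₂ hval
          exact h1 hj₂ hval
      · exact seg_eq_true_iff.2 (Or.inl (Or.inl ⟨hj₂, hval⟩))
    have h3 := h hmem
    simp only [Set.mem_setOf_eq] at h3
    have h4 : seg (S1 F g ∪ {j}) j = true :=
      seg_eq_true_iff.2 (Or.inr rfl)
    exact Bool.false_ne_true (h3.symm.trans h4)


lemma mk_finset_subtype_lt (hun : ℵ₀ < κ) {β : Type} (P : Set β)
    (hP : #P < κ) : #(Finset ↥P) < κ := by
  by_cases h : Infinite ↥P
  · rw [Cardinal.mk_finset_of_infinite]
    exact hP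
  · haveI : Finite ↥P := not_infinite_iff_finite.mp h
    haveI : Fintype ↥P := Fintype.ofFinite _
    exact lt_trans (Cardinal.lt_aleph0_of_finite _) hun

lemma count_lt (hreg : κ.IsRegular) (hun : ℵ₀ < κ) :
    ∀ u ∈ BB κ, #{v : Set (Xt κ) // v ∈ BB κ ∧ u ⊂ v} < κ := by
  rintro u ⟨F, g, hgood, rfl⟩
  set N : Set (I κ) := ↑F ∪ ⋃ j' : F, Set.Iic (j' : I κ) with hN
  set P : Set (I κ) := N ∪ (fun i : I κ => oc (ofLex i).1) '' N with hPdef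
  have hS1N : S1 F g ⊆ N := by
    rintro i (⟨hi, _⟩ | ⟨j', hj', _, _, hle⟩)
    · exact Or.inl hi
    · exact Or.inr (Set.mem_iUnion.2 ⟨⟨j', hj'⟩, Set.mem_Iic.2 hle⟩)
  have hNP : N ⊆ P := Set.subset_union_left
  have hmkN : #N < κ := by
    apply lt_of_le_of_lt (Cardinal.mk_union_le _ _)
    apply Cardinal.add_lt_of_lt hreg.aleph0_le
    · exact lt_trans (Cardinal.lt_aleph0_of_finite _) hun
    · apply lt_of_le_of_lt (Cardinal.mk_iUnion_le _)
      apply Cardinal.mul_lt_of_lt hreg.aleph0_le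
        (lt_trans (Cardinal.lt_aleph0_of_finite _) hun)
      exact Cardinal.iSup_lt_of_isRegular hreg
        (lt_trans (Cardinal.lt_aleph0_of_finite _) hun) (fun j' => mk_Iic_I_lt hreg _)
  have hmkP : #P < κ := by
    apply lt_of_le_of_lt (Cardinal.mk_union_le _ _)
    exact Cardinal.add_lt_of_lt hreg.aleph0_le hmkN
      (lt_of_le_of_lt Cardinal.mk_image_le hmkN)
  have key : ∀ v : Set (Xt κ), v ∈ BB κ → cylX F g ⊆ v →
      ∃ A : Finset (I κ), ↑A ⊆ P ∧ ∃ gA, v = cylX A gA := by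
    rintro v ⟨Fv, gv, hgv, rfl⟩ hsub
    refine ⟨Fv, ?_, gv, rfl⟩
    intro j hj
    rw [Finset.mem_coe] at hj
    have hforced : cylX F g ⊆ {f : Xt κ | (f : I κ → Bool) j = gv j} :=
      fun f hf => (hsub hf) j hj
    cases hval : gv j
    · rw [hval] at hforced
      rcases forced_zero hgood hforced with ⟨hjF, _⟩ | ⟨hodd, _⟩
      · exact hNP (Or.inl hjF)
      · obtain ⟨hpeF, hpev⟩ := hgv.1 j hj hodd hval
        have hforced1 : cylX F g ⊆ {f : Xt κ | (f : I κ → Bool) (pe j) = true} := by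
          intro f hf
          have h5 := (hsub hf) (pe j) hpeF
          rw [hpev] at h5
          exact h5
        have hmemS1 : pe j ∈ S1 F g := forced_one hgood hforced1
        refine Or.inr ⟨pe j, hS1N hmemS1, ?_⟩
        show oc (ofLex (pe j)).1 = j
        have h6 : (ofLex (pe j)).1 = (ofLex j).1 := rfl
        rw [h6]
        exact oc_eq_of_odd hodd
    · rw [hval] at hforced
      exact hNP (hS1N (forced_one hgood hforced))
  have hch : ∀ v : {v : Set (Xt κ) // v ∈ BB κ ∧ cylX F g ⊂ v},
      ∃ A : Finset (I κ), ↑A ⊆ P ∧ ∃ gA, v.1 = cylX A gA :=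
    fun v => key v.1 v.2.1 v.2.2.le
  choose A hAP gA hgA using hch
  have hΦ : Function.Injective (fun v : {v : Set (Xt κ) // v ∈ BB κ ∧ cylX F g ⊂ v} =>
      (⟨A v, hAP v⟩ : {A : Finset (I κ) // ↑A ⊆ P})) := by
    intro v v' h
    simp only [Subtype.mk.injEq] at h
    apply Subtype.ext
    rw [hgA v, hgA v']
    have hfm := fmin_mem_cylX hgood
    have h1 : (⟨seg (S1 F g), seg_S1_mem_Xs⟩ : Xt κ) ∈ v.1 := v.2.2.le hfm
    have h2 : (⟨seg (S1 F g), seg_S1_mem_Xs⟩ : Xt κ) ∈ v'.1 := v'.2.2.le hfm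
    rw [hgA v] at h1
    rw [hgA v'] at h2
    have hval : ∀ j ∈ A v, gA v j = gA v' j := by
      intro j hj
      have e1 := h1 j hj
      have e2 := h2 j (h ▸ hj)
      exact e1.symm.trans e2
    rw [← h]
    ext f
    simp only [cylX, Set.mem_setOf_eq]
    exact ⟨fun hf j hj => (hf j hj).trans (hval j hj),
      fun hf j hj => (hf j hj).trans (hval j hj).symm⟩
  apply lt_of_le_of_lt (Cardinal.mk_le_of_injective hΦ)
  have hψ : Function.Injective (fun A : {A : Finset (I κ) // ↑A ⊆ P} =>
      (A.1.subtype (· ∈ P) : Finset ↥P)) := by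
    intro B B' h
    simp only at h
    apply Subtype.ext
    ext j
    constructor
    · intro hj
      have h7 : (⟨j, B.2 hj⟩ : ↥P) ∈ B.1.subtype (· ∈ P) := Finset.mem_subtype.2 hj
      rw [h] at h7
      exact Finset.mem_subtype.1 h7
    · intro hj
      have h7 : (⟨j, B'.2 hj⟩ : ↥P) ∈ B'.1.subtype (· ∈ P) := Finset.mem_subtype.2 hj
      rw [← h] at h7
      exact Finset.mem_subtype.1 h7
  apply lt_of_le_of_lt (Cardinal.mk_le_of_injective hψ)
  exact mk_finset_subtype_lt hun P hmkP


/-- general lower bound: a `T1` space with a non-isolated `P_κ`-point has Noetherian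
type at least `κ`. -/
lemma lower_bound {Y : Type} [TopologicalSpace Y] [T1Space Y] {κ : Cardinal.{0}} (p : Y)
    (hpk : IsPkappaPoint p κ) (hni : ∀ u ∈ nhds p, ∃ q ∈ u, q ≠ p)
    {c : Cardinal.{0}} (hc : ℵ₀ ≤ c) (hcκ : c < κ)
    {B : Set (Set Y)} (hB : IsTopologicalBasis B)
    (hcount : ∀ u ∈ B, #{v : Set Y // v ∈ B ∧ u ⊂ v} < c) : False := by
  set Bp := {v ∈ B | p ∈ v} with hBpdef
  have hnb : ∀ v ∈ Bp, v ∈ nhds p := fun v hv => (hB.isOpen hv.1).mem_nhds hv.2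
  have hdir : ∀ S : Set (Set Y), S ⊆ Bp → #S < κ → ∃ w ∈ B, p ∈ w ∧ w ⊆ ⋂₀ S := by
    intro S hS hSc
    have hint : ⋂₀ S ∈ nhds p := hpk S hSc (fun u hu => hnb u (hS hu))
    obtain ⟨t, hts, hto, hpt⟩ := mem_nhds_iff.mp hint
    obtain ⟨w, hwB, hpw, hwt⟩ := hB.exists_subset_of_mem_open hpt hto
    exact ⟨w, hwB, hpw, hwt.trans hts⟩
  have hBpc : c ≤ #Bp := by
    by_contra hlt
    push_neg at hlt
    obtain ⟨w, hwB, hpw, hwsub⟩ := hdir Bp (fun _ h => h) (hlt.trans hcκ)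
    obtain ⟨q, hqw, hqp⟩ := hni w ((hB.isOpen hwB).mem_nhds hpw)
    have hpmem : p ∈ ({q}ᶜ : Set Y) := by simp [Ne.symm hqp]
    obtain ⟨v, hvB, hpv, hvsub⟩ := hB.exists_subset_of_mem_open hpmem
      isOpen_compl_singleton
    have hqv : q ∈ v := Set.mem_sInter.1 (hwsub hqw) v ⟨hvB, hpv⟩
    exact (hvsub hqv) rfl
  obtain ⟨S, hSsub, hScard⟩ := Cardinal.le_mk_iff_exists_subset.mp hBpc
  obtain ⟨w, hwB, hpw, hwsub⟩ := hdir S hSsub (by rw [hScard]; exact hcκ)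
  have hsup : ∀ v ∈ S \ {w}, v ∈ B ∧ w ⊂ v := by
    intro v hv
    refine ⟨(hSsub hv.1).1, ssubset_iff_subset_ne.2
      ⟨hwsub.trans (Set.sInter_subset_of_mem hv.1), ?_⟩⟩
    exact Ne.symm (fun h => hv.2 (Set.mem_singleton_iff.2 h))
  have hcard2 : c ≤ #{v : Set Y // v ∈ B ∧ w ⊂ v} := by
    have hinj : Function.Injective (fun v : ↥(S \ {w}) =>
        (⟨v.1, hsup v.1 v.2⟩ : {v : Set Y // v ∈ B ∧ w ⊂ v})) :=
      fun a b h => Subtype.ext (congrArg Subtype.val h : _)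
    refine le_trans ?_ (Cardinal.mk_le_of_injective hinj)
    by_contra hlt
    push_neg at hlt
    have h1 : #S ≤ #(S \ {w} : Set (Set Y)) + 1 := by
      refine le_trans (Cardinal.mk_le_mk_of_subset (t := (S \ {w}) ∪ {w}) ?_) ?_
      · intro x hx
        by_cases hxw : x = w
        · exact Or.inr (Set.mem_singleton_iff.2 hxw)
        · exact Or.inl ⟨hx, fun h => hxw (Set.mem_singleton_iff.1 h)⟩
      · refine le_trans (Cardinal.mk_union_le _ _) ?_
        rw [Cardinal.mk_singleton]
    have h2 : #S < c := lt_of_le_of_lt h1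
      (Cardinal.add_lt_of_lt hc hlt (lt_of_lt_of_le Cardinal.one_lt_aleph0 hc))
    rw [hScard] at h2
    exact lt_irrefl c h2
  exact absurd hcard2 (not_le_of_gt (hcount w hwB))

end NtProof
end

/-- For every regular uncountable cardinal `κ` there is a totally disconnected compact
Hausdorff space `X` with `Nt(X) = κ` having a `P_κ`-point. -/
theorem exists_compactum_noetherianType_eq (κ : Cardinal.{0})
    (hreg : κ.IsRegular) (huncount : ℵ₀ < κ) :
    ∃ (X : Type) (_ : TopologicalSpace X), CompactSpace X ∧ T2Space X ∧
      TotallyDisconnectedSpace X ∧ noetherianType X = κ ∧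
      ∃ p : X, IsPkappaPoint p κ := by
  refine ⟨NtProof.Xt κ, inferInstance, inferInstance, inferInstance, inferInstance, ?_,
    ⟨NtProof.pp, NtProof.pk hreg huncount⟩⟩
  apply le_antisymm
  · exact csInf_le' ⟨hreg.aleph0_le, NtProof.BB κ, NtProof.basis_BB,
      NtProof.count_lt hreg huncount⟩
  · apply le_csInf
    · exact ⟨κ, hreg.aleph0_le, NtProof.BB κ, NtProof.basis_BB,
        NtProof.count_lt hreg huncount⟩
    · rintro c ⟨hc, B, hB, hcount⟩
      by_contra hlt
      push_neg at hlt
      exact NtProof.lower_bound NtProof.pp (NtProof.pk hreg huncount)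
        (NtProof.not_isolated hreg huncount) hc hlt hB hcount
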